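/- Let K be the field of fractions of ℚ[x₀,x₁,x₂,x₃,x₄,x₅], set A = (x₂x₄+x₃x₅)/(x₀x₁), B = (x₁x₄+x₀x₅)/(x₂x₃), C = (x₀x₂+x₁x₃)/(x₄x₅), and let τ'₁, τ'₂, τ'₃ be the maps on K⁶ defined by: τ'₁ replaces (v₀,v₁) by ((v₂v₄+v₃v₅)/v₁, (v₂v₄+v₃v₅)/v₀); τ'₂ replaces (v₂,v₃) by ((v₁v₄+v₀v₅)/v₃, (v₁v₄+v₀v₅)/v₂); τ'₃ replaces (v₄,v₅) by ((v₀v₂+v₁v₃)/v₅, (v₀v₂+v₁v₃)/v₄); each fixes the remaining entries. For natural numbers s, t, let w be the word consisting of the block (1,2,3) repeated 2t times, then the letters (1,2), then the block (1,3,2) repeated 2s times, and let v be the result of applying the maps to X = (x₀,…,x₅) in left-to-right order along w. Then v₀ = x₀·A^{3s²+3st+3t²+3t+1}·B^{3s²+3st+3t²+s+2t}·C^{3s²+3st+3t²−s+t} and v₁ = x₁ times the same monomial in A, B, C. -/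

import Mathlib

noncomputable section

/-- The polynomial ring ℚ[x₀,…,x₅]. -/
abbrev P : Type := MvPolynomial (Fin 6) ℚ

/-- K = Frac(ℚ[x₀,…,x₅]). -/
abbrev K : Type := FractionRing P

/-- The images of the variables x₀,…,x₅ in K. -/
def x (i : Fin 6) : K := algebraMap P K (MvPolynomial.X i)

/-- τ'₁ : replaces (v₀, v₁) by ((v₂v₄+v₃v₅)/v₁, (v₂v₄+v₃v₅)/v₀). -/
def tau1 (v : Fin 6 → K) : Fin 6 → K := fun k =>
  if k = 0 then (v 2 * v 4 + v 3 * v 5) / v 1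
  else if k = 1 then (v 2 * v 4 + v 3 * v 5) / v 0
  else v k

/-- τ'₂ : replaces (v₂, v₃) by ((v₁v₄+v₀v₅)/v₃, (v₁v₄+v₀v₅)/v₂). -/
def tau2 (v : Fin 6 → K) : Fin 6 → K := fun k =>
  if k = 2 then (v 1 * v 4 + v 0 * v 5) / v 3
  else if k = 3 then (v 1 * v 4 + v 0 * v 5) / v 2
  else v k

/-- τ'₃ : replaces (v₄, v₅) by ((v₀v₂+v₁v₃)/v₅, (v₀v₂+v₁v₃)/v₄). -/
def tau3 (v : Fin 6 → K) : Fin 6 → K := fun k =>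
  if k = 4 then (v 0 * v 2 + v 1 * v 3) / v 5
  else if k = 5 then (v 0 * v 2 + v 1 * v 3) / v 4
  else v k

/-- τ' indexed by Fin 3: `tau i` is τ'_{i+1}. -/
def tau : Fin 3 → (Fin 6 → K) → (Fin 6 → K)
  | 0 => tau1
  | 1 => tau2
  | 2 => tau3

/-- The initial labeled seed X = (x₀,…,x₅). -/
def X0 : Fin 6 → K := x

/-- Apply the maps τ'₍a₁₎, …, τ'₍aₙ₎ along the word `w` in left-to-right order. -/
def applyWord (w : List (Fin 3)) (v : Fin 6 → K) : Fin 6 → K :=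
  w.foldl (fun u a => tau a u) v

/-- A = (x₂x₄+x₃x₅)/(x₀x₁). -/
def A : K := (x 2 * x 4 + x 3 * x 5) / (x 0 * x 1)

/-- B = (x₁x₄+x₀x₅)/(x₂x₃). -/
def B : K := (x 1 * x 4 + x 0 * x 5) / (x 2 * x 3)

/-- C = (x₀x₂+x₁x₃)/(x₄x₅). -/
def C : K := (x 0 * x 2 + x 1 * x 3) / (x 4 * x 5)

/-- The canonical path (123)^{2t} (12) (132)^{2s} to the even alcove (3s, 3t+1)
(letters 1,2,3 are encoded as 0,1,2 in `Fin 3`). -/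
def word8 (s t : ℕ) : List (Fin 3) :=
  (List.replicate (2 * t) ([0, 1, 2] : List (Fin 3))).flatten ++
    ([0, 1] : List (Fin 3)) ++
    (List.replicate (2 * s) ([0, 2, 1] : List (Fin 3))).flatten

-- ===== auxiliary development =====

lemma x_ne_zero (i : Fin 6) : x i ≠ 0 := by
  simp only [x]
  intro h
  have := (map_eq_zero_iff (algebraMap P K) (IsFractionRing.injective P K)).mp h
  exact MvPolynomial.X_ne_zero i this

lemma poly_ne (p : P) (h : MvPolynomial.eval (fun _ => (1:ℚ)) p ≠ 0) :
    algebraMap P K p ≠ 0 := by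
  intro h0
  have := (map_eq_zero_iff (algebraMap P K) (IsFractionRing.injective P K)).mp h0
  rw [this] at h; simp at h

lemma numA_ne : x 2 * x 4 + x 3 * x 5 ≠ 0 := by
  have : x 2 * x 4 + x 3 * x 5 =
      algebraMap P K (MvPolynomial.X 2 * MvPolynomial.X 4 + MvPolynomial.X 3 * MvPolynomial.X 5) := by
    simp [x, map_add, map_mul]
  rw [this]; exact poly_ne _ (by simp)

lemma numB_ne : x 1 * x 4 + x 0 * x 5 ≠ 0 := by
  have : x 1 * x 4 + x 0 * x 5 =
      algebraMap P K (MvPolynomial.X 1 * MvPolynomial.X 4 + MvPolynomial.X 0 * MvPolynomial.X 5) := by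
    simp [x, map_add, map_mul]
  rw [this]; exact poly_ne _ (by simp)

lemma numC_ne : x 0 * x 2 + x 1 * x 3 ≠ 0 := by
  have : x 0 * x 2 + x 1 * x 3 =
      algebraMap P K (MvPolynomial.X 0 * MvPolynomial.X 2 + MvPolynomial.X 1 * MvPolynomial.X 3) := by
    simp [x, map_add, map_mul]
  rw [this]; exact poly_ne _ (by simp)

lemma A_ne : A ≠ 0 := div_ne_zero numA_ne (mul_ne_zero (x_ne_zero 0) (x_ne_zero 1))
lemma B_ne : B ≠ 0 := div_ne_zero numB_ne (mul_ne_zero (x_ne_zero 2) (x_ne_zero 3))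
lemma C_ne : C ≠ 0 := div_ne_zero numC_ne (mul_ne_zero (x_ne_zero 4) (x_ne_zero 5))

lemma relA : x 2 * x 4 + x 3 * x 5 = A * (x 0 * x 1) :=
  (div_mul_cancel₀ _ (mul_ne_zero (x_ne_zero 0) (x_ne_zero 1))).symm
lemma relB : x 1 * x 4 + x 0 * x 5 = B * (x 2 * x 3) :=
  (div_mul_cancel₀ _ (mul_ne_zero (x_ne_zero 2) (x_ne_zero 3))).symm
lemma relC : x 0 * x 2 + x 1 * x 3 = C * (x 4 * x 5) :=
  (div_mul_cancel₀ _ (mul_ne_zero (x_ne_zero 4) (x_ne_zero 5))).symm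

/-- Monomial seed: vertices 0,1 carry A^pa B^pb C^pc, vertices 2,3 carry q's, 4,5 carry r's. -/
def V (pa pb pc qa qb qc ra rb rc : ℤ) : Fin 6 → K := fun k =>
  if k = 0 then x 0 * (A ^ pa * B ^ pb * C ^ pc)
  else if k = 1 then x 1 * (A ^ pa * B ^ pb * C ^ pc)
  else if k = 2 then x 2 * (A ^ qa * B ^ qb * C ^ qc)
  else if k = 3 then x 3 * (A ^ qa * B ^ qb * C ^ qc)
  else if k = 4 then x 4 * (A ^ ra * B ^ rb * C ^ rc)
  else x 5 * (A ^ ra * B ^ rb * C ^ rc)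

lemma tau1_V (pa pb pc qa qb qc ra rb rc : ℤ) :
    tau1 (V pa pb pc qa qb qc ra rb rc) =
    V (qa + ra + 1 - pa) (qb + rb - pb) (qc + rc - pc) qa qb qc ra rb rc := by
  have hMp : A ^ pa * B ^ pb * C ^ pc ≠ 0 :=
    mul_ne_zero (mul_ne_zero (zpow_ne_zero _ A_ne) (zpow_ne_zero _ B_ne)) (zpow_ne_zero _ C_ne)
  funext k
  fin_cases k <;> simp [tau1, V]
  all_goals
    rw [show x 2 * (A ^ qa * B ^ qb * C ^ qc) * (x 4 * (A ^ ra * B ^ rb * C ^ rc)) +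
        x 3 * (A ^ qa * B ^ qb * C ^ qc) * (x 5 * (A ^ ra * B ^ rb * C ^ rc)) =
        (x 2 * x 4 + x 3 * x 5) * ((A ^ qa * B ^ qb * C ^ qc) * (A ^ ra * B ^ rb * C ^ rc)) from by
          ring, relA, div_eq_iff (mul_ne_zero (x_ne_zero _) hMp),
      zpow_sub₀ A_ne, zpow_sub₀ B_ne, zpow_sub₀ C_ne, zpow_add₀ A_ne, zpow_add₀ A_ne,
      zpow_add₀ B_ne, zpow_add₀ C_ne, zpow_one]
    field_simp [zpow_ne_zero _ A_ne, zpow_ne_zero _ B_ne, zpow_ne_zero _ C_ne]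

lemma tau2_V (pa pb pc qa qb qc ra rb rc : ℤ) :
    tau2 (V pa pb pc qa qb qc ra rb rc) =
    V pa pb pc (pa + ra - qa) (pb + rb + 1 - qb) (pc + rc - qc) ra rb rc := by
  have hMq : A ^ qa * B ^ qb * C ^ qc ≠ 0 :=
    mul_ne_zero (mul_ne_zero (zpow_ne_zero _ A_ne) (zpow_ne_zero _ B_ne)) (zpow_ne_zero _ C_ne)
  funext k
  fin_cases k <;> simp [tau2, V]
  all_goals
    rw [show x 1 * (A ^ pa * B ^ pb * C ^ pc) * (x 4 * (A ^ ra * B ^ rb * C ^ rc)) +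
        x 0 * (A ^ pa * B ^ pb * C ^ pc) * (x 5 * (A ^ ra * B ^ rb * C ^ rc)) =
        (x 1 * x 4 + x 0 * x 5) * ((A ^ pa * B ^ pb * C ^ pc) * (A ^ ra * B ^ rb * C ^ rc)) from by
          ring, relB, div_eq_iff (mul_ne_zero (x_ne_zero _) hMq),
      zpow_sub₀ A_ne, zpow_sub₀ B_ne, zpow_sub₀ C_ne, zpow_add₀ A_ne,
      zpow_add₀ B_ne, zpow_add₀ B_ne, zpow_add₀ C_ne, zpow_one]
    field_simp [zpow_ne_zero _ A_ne, zpow_ne_zero _ B_ne, zpow_ne_zero _ C_ne]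

lemma tau3_V (pa pb pc qa qb qc ra rb rc : ℤ) :
    tau3 (V pa pb pc qa qb qc ra rb rc) =
    V pa pb pc qa qb qc (pa + qa - ra) (pb + qb - rb) (pc + qc + 1 - rc) := by
  have hMr : A ^ ra * B ^ rb * C ^ rc ≠ 0 :=
    mul_ne_zero (mul_ne_zero (zpow_ne_zero _ A_ne) (zpow_ne_zero _ B_ne)) (zpow_ne_zero _ C_ne)
  funext k
  fin_cases k <;> simp [tau3, V]
  all_goals
    rw [show x 0 * (A ^ pa * B ^ pb * C ^ pc) * (x 2 * (A ^ qa * B ^ qb * C ^ qc)) +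
        x 1 * (A ^ pa * B ^ pb * C ^ pc) * (x 3 * (A ^ qa * B ^ qb * C ^ qc)) =
        (x 0 * x 2 + x 1 * x 3) * ((A ^ pa * B ^ pb * C ^ pc) * (A ^ qa * B ^ qb * C ^ qc)) from by
          ring, relC, div_eq_iff (mul_ne_zero (x_ne_zero _) hMr),
      zpow_sub₀ A_ne, zpow_sub₀ B_ne, zpow_sub₀ C_ne, zpow_add₀ A_ne,
      zpow_add₀ B_ne, zpow_add₀ C_ne, zpow_add₀ C_ne, zpow_one]
    field_simp [zpow_ne_zero _ A_ne, zpow_ne_zero _ B_ne, zpow_ne_zero _ C_ne]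

lemma V_congr {pa pb pc qa qb qc ra rb rc pa' pb' pc' qa' qb' qc' ra' rb' rc' : ℤ}
    (h1 : pa = pa') (h2 : pb = pb') (h3 : pc = pc') (h4 : qa = qa') (h5 : qb = qb')
    (h6 : qc = qc') (h7 : ra = ra') (h8 : rb = rb') (h9 : rc = rc') :
    V pa pb pc qa qb qc ra rb rc = V pa' pb' pc' qa' qb' qc' ra' rb' rc' := by
  subst h1 h2 h3 h4 h5 h6 h7 h8 h9; rfl

lemma applyWord_append (w1 w2 : List (Fin 3)) (v : Fin 6 → K) :
    applyWord (w1 ++ w2) v = applyWord w2 (applyWord w1 v) :=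
  List.foldl_append ..

lemma applyWord_123 (v : Fin 6 → K) :
    applyWord [0, 1, 2] v = tau3 (tau2 (tau1 v)) := rfl

lemma applyWord_132 (v : Fin 6 → K) :
    applyWord [0, 2, 1] v = tau2 (tau3 (tau1 v)) := rfl

lemma X0_eq_V : X0 = V 0 0 0 0 0 0 0 0 0 := by
  funext k
  fin_cases k <;> simp [X0, V]

lemma claim1 (t : ℕ) :
    applyWord ((List.replicate (2 * t) ([0, 1, 2] : List (Fin 3))).flatten) X0 =
    V (3*(t:ℤ)^2) (3*(t:ℤ)^2 - t) (3*(t:ℤ)^2 - 2*t)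
      (3*(t:ℤ)^2 + t) (3*(t:ℤ)^2) (3*(t:ℤ)^2 - t)
      (3*(t:ℤ)^2 + 2*t) (3*(t:ℤ)^2 + t) (3*(t:ℤ)^2) := by
  induction t with
  | zero => simpa [applyWord] using X0_eq_V
  | succ t ih =>
    rw [show 2 * (t + 1) = (2 * t + 1) + 1 from by ring, List.replicate_succ',
      List.replicate_succ', List.flatten_append, List.flatten_append,
      applyWord_append, applyWord_append, ih]
    simp only [List.flatten_cons, List.flatten_nil, List.append_nil]
    rw [applyWord_123, applyWord_123, tau1_V, tau2_V, tau3_V, tau1_V, tau2_V, tau3_V]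
    exact V_congr (by push_cast; ring) (by push_cast; ring) (by push_cast; ring)
      (by push_cast; ring) (by push_cast; ring) (by push_cast; ring)
      (by push_cast; ring) (by push_cast; ring) (by push_cast; ring)

lemma claim2 (t : ℕ) (s : ℕ) :
    applyWord ((List.replicate (2 * s) ([0, 2, 1] : List (Fin 3))).flatten)
      (V (3*(t:ℤ)^2 + 3*t + 1) (3*(t:ℤ)^2 + 2*t) (3*(t:ℤ)^2 + t)
        (3*(t:ℤ)^2 + 4*t + 1) (3*(t:ℤ)^2 + 3*t + 1) (3*(t:ℤ)^2 + 2*t)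
        (3*(t:ℤ)^2 + 2*t) (3*(t:ℤ)^2 + t) (3*(t:ℤ)^2)) =
    V (3*(s:ℤ)^2 + 3*s*t + 3*(t:ℤ)^2 + 3*t + 1)
      (3*(s:ℤ)^2 + 3*s*t + 3*(t:ℤ)^2 + s + 2*t)
      (3*(s:ℤ)^2 + 3*s*t + 3*(t:ℤ)^2 - s + t)
      (3*(s:ℤ)^2 + 3*s*t + 3*(t:ℤ)^2 + 2*s + 4*t + 1)
      (3*(s:ℤ)^2 + 3*s*t + 3*(t:ℤ)^2 + 3*s + 3*t + 1)
      (3*(s:ℤ)^2 + 3*s*t + 3*(t:ℤ)^2 + s + 2*t)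
      (3*(s:ℤ)^2 + 3*s*t + 3*(t:ℤ)^2 + s + 2*t)
      (3*(s:ℤ)^2 + 3*s*t + 3*(t:ℤ)^2 + 2*s + t)
      (3*(s:ℤ)^2 + 3*s*t + 3*(t:ℤ)^2) := by
  induction s with
  | zero =>
    simp only [Nat.mul_zero, List.replicate_zero, List.flatten_nil]
    show V _ _ _ _ _ _ _ _ _ = _
    exact V_congr (by push_cast; ring) (by push_cast; ring) (by push_cast; ring)
      (by push_cast; ring) (by push_cast; ring) (by push_cast; ring)
      (by push_cast; ring) (by push_cast; ring) (by push_cast; ring)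
  | succ s ih =>
    rw [show 2 * (s + 1) = (2 * s + 1) + 1 from by ring, List.replicate_succ',
      List.replicate_succ', List.flatten_append, List.flatten_append,
      applyWord_append, applyWord_append, ih]
    simp only [List.flatten_cons, List.flatten_nil, List.append_nil]
    rw [applyWord_132, applyWord_132, tau1_V, tau3_V, tau2_V, tau1_V, tau3_V, tau2_V]
    exact V_congr (by push_cast; ring) (by push_cast; ring) (by push_cast; ring)
      (by push_cast; ring) (by push_cast; ring) (by push_cast; ring)
      (by push_cast; ring) (by push_cast; ring) (by push_cast; ring)

lemma main_eq (s t : ℕ) :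
    applyWord (word8 s t) X0 =
    V (3*(s:ℤ)^2 + 3*s*t + 3*(t:ℤ)^2 + 3*t + 1)
      (3*(s:ℤ)^2 + 3*s*t + 3*(t:ℤ)^2 + s + 2*t)
      (3*(s:ℤ)^2 + 3*s*t + 3*(t:ℤ)^2 - s + t)
      (3*(s:ℤ)^2 + 3*s*t + 3*(t:ℤ)^2 + 2*s + 4*t + 1)
      (3*(s:ℤ)^2 + 3*s*t + 3*(t:ℤ)^2 + 3*s + 3*t + 1)
      (3*(s:ℤ)^2 + 3*s*t + 3*(t:ℤ)^2 + s + 2*t)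
      (3*(s:ℤ)^2 + 3*s*t + 3*(t:ℤ)^2 + s + 2*t)
      (3*(s:ℤ)^2 + 3*s*t + 3*(t:ℤ)^2 + 2*s + t)
      (3*(s:ℤ)^2 + 3*s*t + 3*(t:ℤ)^2) := by
  rw [word8, applyWord_append, applyWord_append, claim1]
  have h01 : ∀ v, applyWord ([0, 1] : List (Fin 3)) v = tau2 (tau1 v) := fun _ => rfl
  rw [h01]
  rw [tau1_V, tau2_V]
  rw [V_congr (pa' := 3*(t:ℤ)^2 + 3*t + 1) (pb' := 3*(t:ℤ)^2 + 2*t) (pc' := 3*(t:ℤ)^2 + t)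
    (qa' := 3*(t:ℤ)^2 + 4*t + 1) (qb' := 3*(t:ℤ)^2 + 3*t + 1) (qc' := 3*(t:ℤ)^2 + 2*t)
    (ra' := 3*(t:ℤ)^2 + 2*t) (rb' := 3*(t:ℤ)^2 + t) (rc' := 3*(t:ℤ)^2)
    (by ring) (by ring) (by ring) (by ring) (by ring) (by ring) (by ring) (by ring) (by ring)]
  exact claim2 t s


/-- Theorem 2.1, case |i| ≡ 0 mod 6, |j| ≡ 1 mod 3, i = 6s, j = 3t+1:
the vertex-0 and vertex-1 cluster variables at the corresponding even alcove. -/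
theorem alcove_even_01 (s t : ℕ) :
    applyWord (word8 s t) X0 0 =
      x 0 * A ^ (3 * (s : ℤ) ^ 2 + 3 * s * t + 3 * t ^ 2 + 3 * t + 1)
          * B ^ (3 * (s : ℤ) ^ 2 + 3 * s * t + 3 * t ^ 2 + s + 2 * t)
          * C ^ (3 * (s : ℤ) ^ 2 + 3 * s * t + 3 * t ^ 2 - s + t) ∧
    applyWord (word8 s t) X0 1 =
      x 1 * A ^ (3 * (s : ℤ) ^ 2 + 3 * s * t + 3 * t ^ 2 + 3 * t + 1)
          * B ^ (3 * (s : ℤ) ^ 2 + 3 * s * t + 3 * t ^ 2 + s + 2 * t)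
          * C ^ (3 * (s : ℤ) ^ 2 + 3 * s * t + 3 * t ^ 2 - s + t) := by
  have h := main_eq s t
  constructor
  · rw [h]
    show x 0 * (A ^ _ * B ^ _ * C ^ _) = _
    rw [show 3*(s:ℤ)^2 + 3*s*t + 3*(t:ℤ)^2 + 3*t + 1
        = 3 * (s : ℤ) ^ 2 + 3 * s * t + 3 * t ^ 2 + 3 * t + 1 from by ring,
      show 3*(s:ℤ)^2 + 3*s*t + 3*(t:ℤ)^2 + s + 2*t
        = 3 * (s : ℤ) ^ 2 + 3 * s * t + 3 * t ^ 2 + s + 2 * t from by ring,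
      show 3*(s:ℤ)^2 + 3*s*t + 3*(t:ℤ)^2 - s + t
        = 3 * (s : ℤ) ^ 2 + 3 * s * t + 3 * t ^ 2 - s + t from by ring]
    ring
  · rw [h]
    show x 1 * (A ^ _ * B ^ _ * C ^ _) = _
    rw [show 3*(s:ℤ)^2 + 3*s*t + 3*(t:ℤ)^2 + 3*t + 1
        = 3 * (s : ℤ) ^ 2 + 3 * s * t + 3 * t ^ 2 + 3 * t + 1 from by ring,
      show 3*(s:ℤ)^2 + 3*s*t + 3*(t:ℤ)^2 + s + 2*t
        = 3 * (s : ℤ) ^ 2 + 3 * s * t + 3 * t ^ 2 + s + 2 * t from by ring,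
      show 3*(s:ℤ)^2 + 3*s*t + 3*(t:ℤ)^2 - s + t
        = 3 * (s : ℤ) ^ 2 + 3 * s * t + 3 * t ^ 2 - s + t from by ring]
    ring
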